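/- Let Λ ⊆ G be a countable set, and suppose there is a uniformly discrete set Λ₀ ⊆ G with Λ₀ − Λ₀ ⊆ Λ. Let V₀ and V be neighbourhoods of 0 with V₀ − V₀ ⊆ V, and let ν be a G-invariant Borel probability measure on the punctured hull Ω×_{Λ₀}. Then for every g ∈ G, Σ_{λ∈Λ} χ_V(g + λ) ≥ ν(O_{V₀} ∩ g.O_{V₀}), where O_{V₀} = {P ∈ Ω×_{Λ₀} : P ∩ V₀ ≠ ∅}. -/

import Mathlib

open scoped Pointwise ENNReal
open MeasureTheory Set Filter Topology

/-- Convergence `P_n → P` in the Chabauty topology, via its sequential characterization. -/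
def ChabautyTendsto {G : Type*} [TopologicalSpace G] (Pn : ℕ → Set G) (P : Set G) : Prop :=
  (∀ φ : ℕ → ℕ, StrictMono φ → ∀ (p : ℕ → G) (x : G),
    (∀ k, p k ∈ Pn (φ k)) → Tendsto p atTop (𝓝 x) → x ∈ P) ∧
  (∀ x ∈ P, ∃ p : ℕ → G, (∀ n, p n ∈ Pn n) ∧ Tendsto p atTop (𝓝 x))

/-- `P` belongs to the hull of `P₀`, i.e. it is a Chabauty limit of translates `P₀ - g_n`. -/
def InHull {G : Type*} [AddCommGroup G] [TopologicalSpace G] (P₀ P : Set G) : Prop :=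
  ∃ g : ℕ → G, ChabautyTendsto (fun n => P₀ - ({g n} : Set G)) P

/-- If `Λ` is countable, `Λ₀` is uniformly discrete with `Λ₀ - Λ₀ ⊆ Λ`, `V₀ - V₀ ⊆ V` for
neighbourhoods `V₀, V` of `0`, and `ν` is a `G`-invariant probability measure on the punctured
hull of `Λ₀`, then for every `g ∈ G`:
`Σ_{λ ∈ Λ} χ_V(g + λ) ≥ ν(O_{V₀} ∩ g.O_{V₀})`, where
`O_{V₀} = {P ∈ Ω×_{Λ₀} : P ∩ V₀ ≠ ∅}` and `g.O_{V₀}` is its translate. -/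
theorem stmt11 {G : Type*} [AddCommGroup G] [TopologicalSpace G] [IsTopologicalAddGroup G]
    [LocallyCompactSpace G] [SecondCountableTopology G]
    [MeasurableSpace (Set G)]
    (Λ Λ₀ : Set G) (hΛc : Λ.Countable)
    (hud : ∃ U : Set G, IsOpen U ∧ (0 : G) ∈ U ∧ (Λ₀ - Λ₀) ∩ U = {0})
    (hdiff : Λ₀ - Λ₀ ⊆ Λ)
    (V₀ V : Set G) (hV₀o : IsOpen V₀) (hV₀0 : (0 : G) ∈ V₀)
    (hVo : IsOpen V) (hV0 : (0 : G) ∈ V) (hV₀V : V₀ - V₀ ⊆ V)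
    (ν : Measure (Set G)) [IsProbabilityMeasure ν]
    (hνhull : ν {P : Set G | ¬ (InHull Λ₀ P ∧ P.Nonempty)} = 0)
    (hinv : ∀ h : G, Measure.map (fun P : Set G => P - ({h} : Set G)) ν = ν)
    (g : G) :
    ν ({P : Set G | (InHull Λ₀ P ∧ P.Nonempty) ∧ (P ∩ V₀).Nonempty} ∩
        ((fun P : Set G => P - ({g} : Set G)) ''
          {P : Set G | (InHull Λ₀ P ∧ P.Nonempty) ∧ (P ∩ V₀).Nonempty})) ≤
      ∑' l : Λ, V.indicator (fun _ => (1 : ℝ≥0∞)) (g + (l : G)) := by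
  set O : Set (Set G) := {P : Set G | (InHull Λ₀ P ∧ P.Nonempty) ∧ (P ∩ V₀).Nonempty} with hO
  rcases Set.eq_empty_or_nonempty (O ∩ ((fun P : Set G => P - ({g} : Set G)) '' O)) with hS | ⟨P, hPO, hPim⟩
  · rw [hS]; simp
  · -- extract data
    obtain ⟨Q, hQO, hQP⟩ := hPim
    obtain ⟨⟨hQhull, -⟩, ⟨y, hyQ, hyV₀⟩⟩ := hQO
    obtain ⟨-, ⟨x, hxP, hxV₀⟩⟩ := hPO
    -- x ∈ P = Q - {g}, so x + g ∈ Q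
    rw [← hQP] at hxP
    obtain ⟨a, haQ, b, hbg, heq⟩ := Set.mem_sub.mp hxP
    have hbg' : b = g := hbg
    rw [hbg'] at heq
    rw [← heq] at hxV₀
    obtain ⟨gs, hCh⟩ := hQhull
    obtain ⟨p, hp, hpt⟩ := hCh.2 y hyQ
    obtain ⟨q, hq, hqt⟩ := hCh.2 a haQ
    -- g + (p n - q n) → g + (y - a) = y - (a - g) ∈ V₀ - V₀ ⊆ V
    have hmemV : g + (y - a) ∈ V := by
      have : y - (a - g) ∈ V₀ - V₀ := Set.sub_mem_sub hyV₀ hxV₀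
      have h2 : g + (y - a) = y - (a - g) := by abel
      rw [h2]; exact hV₀V this
    have htend : Tendsto (fun n => g + (p n - q n)) atTop (𝓝 (g + (y - a))) :=
      tendsto_const_nhds.add (hpt.sub hqt)
    have hev : ∀ᶠ n in atTop, g + (p n - q n) ∈ V :=
      htend.eventually (hVo.eventually_mem hmemV)
    obtain ⟨n, hn⟩ := hev.exists
    have hlΛ : p n - q n ∈ Λ := by
      obtain ⟨b, hb, u, hu, hbeq⟩ := Set.mem_sub.mp (hp n)
      obtain ⟨c, hc, v, hv, hceq⟩ := Set.mem_sub.mp (hq n)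
      have hu' : u = gs n := hu
      have hv' : v = gs n := hv
      have : p n - q n = b - c := by rw [← hbeq, ← hceq, hu', hv']; abel
      rw [this]
      exact hdiff (Set.sub_mem_sub hb hc)
    calc ν (O ∩ ((fun P : Set G => P - ({g} : Set G)) '' O))
        ≤ ν Set.univ := measure_mono (Set.subset_univ _)
      _ = 1 := measure_univ
      _ ≤ ∑' l : Λ, V.indicator (fun _ => (1 : ℝ≥0∞)) (g + (l : G)) := by
          have h := ENNReal.le_tsum (f := fun l : Λ => V.indicator (fun _ => (1 : ℝ≥0∞)) (g + (l : G))) ⟨p n - q n, hlΛ⟩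
          simpa [Set.indicator_of_mem hn] using h
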